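/- For every integer k there exist integers a, b, c, d, e, f satisfying a² + c² - e² = k, f² - b² - d² = k, and a·b + c·d - e·f = 0. Equivalently, for every integer k there is a 3×2 integer matrix P with Pᵀ·diag(1,1,-1)·P = k·diag(1,-1). (This is the algebraic content of: for every integer k there is a degree k map f: (ℂP²)^{♯2}♯(ℂP²-bar) → ℂP²♯(ℂP²-bar); for k ≡ 2 (mod 4), which is not a difference of two squares, one can take a=1, b=2, c=2t+1, d=2t+2, e=2t, f=2t+3 where k=4t+2.) -/
import Mathlib

theorem degree_cp2_two_cp2bar_to_cp2_cp2bar (k : ℤ) :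
    ∃ a b c d e f : ℤ,
      a ^ 2 + c ^ 2 - e ^ 2 = k ∧
      f ^ 2 - b ^ 2 - d ^ 2 = k ∧
      a * b + c * d - e * f = 0 := by
  obtain ⟨n, hn | hn⟩ := Int.even_or_odd' k
  · obtain ⟨m, hm | hm⟩ := Int.even_or_odd' n
    · exact ⟨m + 1, m - 1, 0, 0, m - 1, m + 1, by subst hn hm; ring,
        by subst hn hm; ring, by ring⟩
    · exact ⟨2 * m + 1, 2 * m + 1, 1, -1, 2 * m, 2 * m + 2, by subst hn hm; ring,
        by subst hn hm; ring, by ring⟩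
  · exact ⟨n + 1, n, 0, 0, n, n + 1, by subst hn; ring, by subst hn; ring, by ring⟩
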